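/- Suppose H is stoquastic and irreducible in the basis B. Then the ground-state eigenspace of H contains a unit-norm eigenvector ψ with ψ_x > 0 (strictly positive real) for every x ∈ B. -/

import Mathlib

open scoped BigOperators ComplexOrder

/-- The ℓ²-operator norm of a matrix over ℂ. -/
noncomputable def opNorm {B : Type*} [Fintype B] [DecidableEq B] (H : Matrix B B ℂ) : ℝ :=
  ‖Matrix.toEuclideanCLM (𝕜 := ℂ) H‖

/-- The ground-state probability measure of a subset `S`. -/
noncomputable def piS {B : Type*} (ψ : B → ℂ) (S : Finset B) : ℝ :=
  ∑ z ∈ S, ‖ψ z‖ ^ 2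

open scoped Classical in
/-- The interior boundary `∂S` of the set `S` with respect to the matrix `H`. -/
noncomputable def bdry {B : Type*} [Fintype B] (H : Matrix B B ℂ) (S : Finset B) : Finset B :=
  S.filter (fun x => ∃ y ∉ S, H x y ≠ 0)

lemma shifted_psd {B : Type*} [Fintype B] [DecidableEq B]
    (H : Matrix B B ℂ) (hH : H.IsHermitian) (E₀ : ℝ)
    (hmin : ∀ i, E₀ ≤ hH.eigenvalues i) :
    (H - (E₀ : ℂ) • (1 : Matrix B B ℂ)).PosSemidef := by
  have hU : (hH.eigenvectorUnitary : Matrix B B ℂ) * star (hH.eigenvectorUnitary : Matrix B B ℂ) = 1 :=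
    Matrix.mem_unitaryGroup_iff.mp hH.eigenvectorUnitary.2
  have key : H - (E₀ : ℂ) • (1 : Matrix B B ℂ)
      = (hH.eigenvectorUnitary : Matrix B B ℂ)
        * Matrix.diagonal (fun i => ((hH.eigenvalues i - E₀ : ℝ) : ℂ))
        * star (hH.eigenvectorUnitary : Matrix B B ℂ) := by
    conv_lhs => rw [hH.spectral_theorem, Unitary.conjStarAlgAut_apply, ← hU]
    rw [← Matrix.smul_mul, ← Matrix.sub_mul,
      show (E₀:ℂ) • (hH.eigenvectorUnitary : Matrix B B ℂ)
          = (hH.eigenvectorUnitary : Matrix B B ℂ) * ((E₀:ℂ) • 1) by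
        rw [Matrix.mul_smul, Matrix.mul_one],
      ← Matrix.mul_sub, Matrix.smul_one_eq_diagonal, Matrix.diagonal_sub]
    congr 2
    ext i
    push_cast
    simp [Function.comp]
  rw [key, Matrix.star_eq_conjTranspose]
  refine (Matrix.posSemidef_diagonal_iff.mpr fun i => ?_).mul_mul_conjTranspose_same _
  rw [Complex.le_def]
  simp [hmin i, sub_nonneg]

/-- Perron–Frobenius for irreducible stoquastic Hamiltonians: the ground-state
eigenspace contains a unit-norm eigenvector with strictly positive real entries. -/
theorem stmt_12 {B : Type*} [Fintype B] [DecidableEq B]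
    (H : Matrix B B ℂ) (hH : H.IsHermitian)
    -- `H` is stoquastic in the basis `B`: real entries, non-positive off the diagonal:
    (hreal : ∀ z z', (H z z').im = 0)
    (hstoq : ∀ z z', z ≠ z' → (H z z').re ≤ 0)
    -- `H` is irreducible:
    (hirr : (SimpleGraph.fromRel (fun z z' : B => H z z' ≠ 0)).Connected) :
    ∃ E₀ : ℝ, IsLeast (Set.range hH.eigenvalues) E₀ ∧
      ∃ ψ : B → ℂ, H.mulVec ψ = (E₀ : ℂ) • ψ ∧ (∑ z, ‖ψ z‖ ^ 2 = 1) ∧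
        ∀ x, (ψ x).im = 0 ∧ 0 < (ψ x).re := by
  have hne : Nonempty B := hirr.nonempty
  obtain ⟨i₀, -, hmin'⟩ := Finset.exists_min_image Finset.univ hH.eigenvalues Finset.univ_nonempty
  set E₀ := hH.eigenvalues i₀ with hE₀
  have hmin : ∀ i, E₀ ≤ hH.eigenvalues i := fun i => hmin' i (Finset.mem_univ i)
  set v : B → ℂ := ⇑(hH.eigenvectorBasis i₀) with hv_def
  have hv : H.mulVec v = E₀ • v := hH.mulVec_eigenvectorBasis i₀
  have hsum : ∑ z, ‖v z‖ ^ 2 = 1 := by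
    have hn : ‖(hH.eigenvectorBasis i₀ : EuclideanSpace ℂ B)‖ = 1 :=
      hH.eigenvectorBasis.orthonormal.1 i₀
    rw [EuclideanSpace.norm_eq] at hn
    exact Real.sqrt_eq_one.mp hn
  set w : B → ℂ := fun x => (‖v x‖ : ℂ) with hw_def
  have hHre : ∀ x y, H x y = ((H x y).re : ℂ) := by
    intro x y; rw [Complex.ext_iff]; simp [hreal x y]
  have hre0 : ∀ x, ((H.mulVec w) x).re = ∑ y, (H x y).re * ‖v y‖ := by
    intro x
    simp [Matrix.mulVec, dotProduct, Complex.re_sum, Complex.mul_re, hw_def]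
  have hsplit : ∀ (f : B → ℝ) (x : B),
      ∑ y, f y = f x + ∑ y ∈ Finset.univ.erase x, f y := by
    intro f x
    rw [add_comm, Finset.sum_erase_add _ _ (Finset.mem_univ x)]
  -- the eigen-equation at x, off-diagonal part
  have hx1 : ∀ x, ∑ y ∈ Finset.univ.erase x, H x y * v y = (E₀:ℂ) * v x - H x x * v x := by
    intro x
    have h0 : ∑ y, H x y * v y = (E₀:ℂ) * v x := by
      have := congrFun hv x
      simpa [Matrix.mulVec, dotProduct, Complex.real_smul] using this
    rw [eq_sub_iff_add_eq, ← h0]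
    rw [Finset.sum_erase_add _ _ (Finset.mem_univ x)]
  have key : ∀ x, ((H.mulVec w) x).re ≤ E₀ * ‖v x‖ := by
    intro x
    have hx2 : |E₀ - (H x x).re| * ‖v x‖
        ≤ ∑ y ∈ Finset.univ.erase x, (-(H x y).re) * ‖v y‖ := by
      calc |E₀ - (H x x).re| * ‖v x‖
          = ‖((E₀:ℂ) - H x x) * v x‖ := by
            have hxx : (E₀:ℂ) - H x x = ((E₀ - (H x x).re : ℝ) : ℂ) := by
              rw [Complex.ext_iff]; simp [hreal x x]
            rw [norm_mul, hxx, Complex.norm_real, Real.norm_eq_abs]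
        _ = ‖∑ y ∈ Finset.univ.erase x, H x y * v y‖ := by rw [hx1 x, sub_mul]
        _ ≤ ∑ y ∈ Finset.univ.erase x, ‖H x y * v y‖ := norm_sum_le _ _
        _ = ∑ y ∈ Finset.univ.erase x, (-(H x y).re) * ‖v y‖ := by
            refine Finset.sum_congr rfl fun y hy => ?_
            have hyx : x ≠ y := fun h => (Finset.mem_erase.mp hy).1 h.symm
            have hxy : ‖H x y‖ = -(H x y).re := by
              conv_lhs => rw [hHre x y]
              rw [Complex.norm_real, Real.norm_eq_abs, abs_of_nonpos (hstoq x y hyx)]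
            rw [norm_mul, hxy]
    have h3 : ((H.mulVec w) x).re
        = (H x x).re * ‖v x‖ - ∑ y ∈ Finset.univ.erase x, (-(H x y).re) * ‖v y‖ := by
      rw [hre0 x, hsplit (fun y => (H x y).re * ‖v y‖) x]
      simp only [neg_mul, Finset.sum_neg_distrib, sub_neg_eq_add]
    have h4 : ((H x x).re - E₀) * ‖v x‖ ≤ |E₀ - (H x x).re| * ‖v x‖ := by
      refine mul_le_mul_of_nonneg_right ?_ (norm_nonneg _)
      rw [abs_sub_comm]
      exact le_abs_self _
    rw [h3]
    nlinarith [hx2, h4]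
  have keyim : ∀ x, ((H.mulVec w) x).im = 0 := by
    intro x
    simp [Matrix.mulVec, dotProduct, Complex.im_sum, Complex.mul_im, hreal, hw_def]
  -- quadratic form vanishes
  have hPSD := shifted_psd H hH E₀ hmin
  have hMw : (H - (E₀:ℂ) • (1 : Matrix B B ℂ)).mulVec w = H.mulVec w - (E₀:ℂ) • w := by
    rw [Matrix.sub_mulVec, Matrix.smul_mulVec, Matrix.one_mulVec]
  have hquad : (0:ℂ) ≤ dotProduct (star w) ((H - (E₀:ℂ) • (1 : Matrix B B ℂ)).mulVec w) := hPSD.dotProduct_mulVec_nonneg w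
  have hdre : (dotProduct (star w) ((H - (E₀:ℂ) • (1 : Matrix B B ℂ)).mulVec w)).re
      = ∑ x, ‖v x‖ * (((H.mulVec w) x).re - E₀ * ‖v x‖) := by
    rw [hMw]
    simp [dotProduct, Complex.re_sum, Complex.mul_re, Complex.conj_ofReal, hw_def,
      Complex.sub_re, Complex.sub_im, keyim, mul_comm]
  have hd0 : dotProduct (star w) ((H - (E₀:ℂ) • (1 : Matrix B B ℂ)).mulVec w) = 0 := by
    rw [Complex.le_def] at hquad
    have hle : (dotProduct (star w) ((H - (E₀:ℂ) • (1 : Matrix B B ℂ)).mulVec w)).re ≤ 0 := by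
      rw [hdre]
      refine Finset.sum_nonpos fun x _ => ?_
      exact mul_nonpos_iff.2 (Or.inl ⟨norm_nonneg _, sub_nonpos.2 (key x)⟩)
    rw [Complex.ext_iff]
    constructor
    · simpa using le_antisymm hle (by simpa using hquad.1)
    · simpa using hquad.2.symm
  have heig : H.mulVec w = (E₀:ℂ) • w := by
    have := (hPSD.dotProduct_mulVec_zero_iff w).mp hd0
    rw [hMw] at this
    rwa [sub_eq_zero] at this
  -- strict positivity
  have hstep : ∀ x, v x = 0 → ∀ y, H x y ≠ 0 → v y = 0 := by
    intro x hx y hy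
    by_cases hxy : y = x
    · subst hxy; exact hx
    have h0 : ((H.mulVec w) x).re = 0 := by
      rw [heig]
      simp [hw_def, hx]
    rw [hre0 x, hsplit (fun y => (H x y).re * ‖v y‖) x, hx] at h0
    simp only [norm_zero, mul_zero, zero_add] at h0
    have hall := (Finset.sum_eq_zero_iff_of_nonpos (fun z hz => by
      have : x ≠ z := fun h => (Finset.mem_erase.mp hz).1 h.symm
      exact mul_nonpos_iff.2 (Or.inr ⟨hstoq x z this, norm_nonneg _⟩))).mp h0
    have hy' := hall y (Finset.mem_erase.mpr ⟨hxy, Finset.mem_univ y⟩)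
    have hre_ne : (H x y).re ≠ 0 := by
      intro h
      apply hy
      rw [hHre x y, h]
      simp
    have : ‖v y‖ = 0 := by
      rcases mul_eq_zero.mp hy' with h | h
      · exact absurd h hre_ne
      · exact h
    simpa using this
  have hsym : ∀ x y, H y x ≠ 0 → H x y ≠ 0 := by
    intro x y h h'
    apply h
    have := congrFun (congrFun hH y) x
    rw [Matrix.conjTranspose_apply] at this
    rw [← this, h']
    simp
  have hreach : ∀ x y, (SimpleGraph.fromRel (fun z z' : B => H z z' ≠ 0)).Reachable x y →
      v x = 0 → v y = 0 := by
    intro x y h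
    obtain ⟨p⟩ := h
    induction p with
    | nil => exact fun h => h
    | cons hadj p ih =>
        intro hx
        refine ih ?_
        obtain ⟨-, hor⟩ := hadj
        rcases hor with h | h
        · exact hstep _ hx _ h
        · exact hstep _ hx _ (hsym _ _ h)
  have hvne : ∀ x, v x ≠ 0 := by
    intro x hx
    have hzero : ∀ y, v y = 0 := fun y => hreach x y (hirr.preconnected x y) hx
    rw [Finset.sum_eq_zero (fun z _ => by rw [hzero z]; simp)] at hsum
    exact zero_ne_one hsum
  refine ⟨E₀, ⟨⟨i₀, rfl⟩, ?_⟩, w, heig, ?_, ?_⟩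
  · rintro _ ⟨i, rfl⟩; exact hmin i
  · calc ∑ z, ‖w z‖ ^ 2 = ∑ z, ‖v z‖ ^ 2 := by
          refine Finset.sum_congr rfl fun z _ => ?_
          rw [hw_def]
          simp
        _ = 1 := hsum
  · intro x
    refine ⟨by simp [hw_def], ?_⟩
    have : 0 < ‖v x‖ := norm_pos_iff.mpr (hvne x)
    simpa [hw_def] using this
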